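/- For a positive even integer m ≥ 2 define H_m(x) := (1/m) Σ_{k=0}^{m−1} (−1)^k T_{2k}(x), where T_j is the j-th Chebyshev polynomial of the first kind. Then for every real z with |z| ≤ 2/m one has |H_m(sin z)| ≤ 1 − (m²/12)·sin²(z). Consequently, combining with the bound |H_m(sin z)| ≤ 3/4 for |z| ≥ 2/m, one has |H_m(x)| ≤ max(3/4, 1 − (m²/12)·x²) for every x ∈ [−1,1]. -/

import Mathlib

set_option maxHeartbeats 1000000

noncomputable section

/-- The helper polynomial `H_m(x) = (1/m) Σ_{k=0}^{m−1} (−1)^k T_{2k}(x)` built from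
Chebyshev polynomials of the first kind. -/
noncomputable def Hpoly (m : ℕ) : Polynomial ℝ :=
  (m : ℝ)⁻¹ • ∑ k ∈ Finset.range m, ((-1 : ℝ)) ^ k • Polynomial.Chebyshev.T ℝ (2 * k)

lemma sin_ge_sub_cube' {t : ℝ} (ht : 0 ≤ t) : t - t ^ 3 / 6 ≤ Real.sin t := by
  have h : ∀ x : ℝ, HasDerivAt (fun y : ℝ => Real.sin y - (y - y ^ 3 / 6))
      (Real.cos x - (1 - x ^ 2 / 2)) x := by
    intro x
    have h2 : HasDerivAt (fun y : ℝ => y - y ^ 3 / 6) (1 - 3 * x ^ 2 / 6) x := by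
      exact ((hasDerivAt_id' x).sub ((hasDerivAt_pow 3 x).div_const 6)).congr_deriv (by norm_num)
    have := (Real.hasDerivAt_sin x).sub h2
    exact this.congr_deriv (by ring)
  have mono : MonotoneOn (fun y : ℝ => Real.sin y - (y - y ^ 3 / 6)) (Set.Ici 0) := by
    apply monotoneOn_of_deriv_nonneg (convex_Ici 0)
    · exact (Continuous.sub Real.continuous_sin (by continuity)).continuousOn
    · intro x _
      exact (h x).differentiableAt.differentiableWithinAt
    · intro x _
      rw [(h x).deriv]
      have := Real.one_sub_sq_div_two_le_cos (x := x)
      linarith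
  have := mono Set.self_mem_Ici (Set.mem_Ici.2 ht) ht
  simp only [Real.sin_zero] at this
  linarith [this]

lemma cos_le_quartic' (t : ℝ) : Real.cos t ≤ 1 - t ^ 2 / 2 + t ^ 4 / 24 := by
  have key : ∀ s : ℝ, 0 ≤ s → Real.cos s ≤ 1 - s ^ 2 / 2 + s ^ 4 / 24 := by
    intro s hs
    have h : ∀ x : ℝ, HasDerivAt (fun y : ℝ => 1 - y ^ 2 / 2 + y ^ 4 / 24 - Real.cos y)
        (-(x) + x ^ 3 / 6 + Real.sin x) x := by
      intro x
      have h2 : HasDerivAt (fun y : ℝ => 1 - y ^ 2 / 2 + y ^ 4 / 24)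
          (0 - 2 * x / 2 + 4 * x ^ 3 / 24) x := by
        exact (((hasDerivAt_const x (1:ℝ)).sub ((hasDerivAt_pow 2 x).div_const 2)).add
          ((hasDerivAt_pow 4 x).div_const 24)).congr_deriv (by norm_num)
      have := h2.sub (Real.hasDerivAt_cos x)
      exact this.congr_deriv (by ring)
    have mono : MonotoneOn (fun y : ℝ => 1 - y ^ 2 / 2 + y ^ 4 / 24 - Real.cos y)
        (Set.Ici 0) := by
      apply monotoneOn_of_deriv_nonneg (convex_Ici 0)
      · exact (Continuous.sub (by continuity) Real.continuous_cos).continuousOn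
      · intro x _
        exact (h x).differentiableAt.differentiableWithinAt
      · intro x hx
        rw [(h x).deriv]
        rw [interior_Ici] at hx
        have := sin_ge_sub_cube' (le_of_lt hx)
        linarith
    have := mono Set.self_mem_Ici (Set.mem_Ici.2 hs) hs
    simp only [Real.cos_zero] at this
    linarith [this]
  rcases le_or_gt 0 t with h | h
  · exact key t h
  · have := key (-t) (by linarith)
    rw [Real.cos_neg] at this
    linarith [this]

lemma Hpoly_eval_sin (m : ℕ) (z : ℝ) :
    Polynomial.eval (Real.sin z) (Hpoly m)
      = (m : ℝ)⁻¹ * ∑ k ∈ Finset.range m, Real.cos (2 * k * z) := by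
  unfold Hpoly
  rw [Polynomial.eval_smul, smul_eq_mul, Polynomial.eval_finset_sum]
  congr 1
  refine Finset.sum_congr rfl fun k _ => ?_
  rw [Polynomial.eval_smul, smul_eq_mul]
  have hsz : Real.sin z = Real.cos (Real.pi / 2 - z) := (Real.cos_pi_div_two_sub z).symm
  rw [hsz, Polynomial.Chebyshev.T_real_cos]
  have harg : ((2 * (k : ℤ) : ℤ) : ℝ) * (Real.pi / 2 - z) = (k : ℝ) * Real.pi - 2 * k * z := by
    push_cast; ring
  rw [harg, Real.cos_nat_mul_pi_sub]
  rw [← mul_assoc, ← mul_pow]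
  simp

lemma dirichlet_cos_sum (m : ℕ) (z : ℝ) :
    2 * Real.sin z * ∑ k ∈ Finset.range m, Real.cos (2 * k * z)
      = Real.sin ((2 * m - 1) * z) + Real.sin z := by
  induction m with
  | zero =>
      simp only [Finset.range_zero, Finset.sum_empty, mul_zero]
      rw [show (2 * ((0:ℕ):ℝ) - 1) * z = -z by push_cast; ring, Real.sin_neg]
      ring
  | succ n ih =>
      rw [Finset.sum_range_succ, mul_add, ih,
        show (2 * ((n+1 : ℕ):ℝ) - 1) * z = 2 * n * z + z by push_cast; ring,
        show (2 * ((n:ℕ):ℝ) - 1) * z = 2 * n * z - z by push_cast [Nat.cast_id]; ring,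
        Real.sin_add, Real.sin_sub]
      ring

lemma sum_sq_range (m : ℕ) :
    ∑ k ∈ Finset.range m, ((k : ℝ)) ^ 2 = m * (m - 1) * (2 * m - 1) / 6 := by
  induction m with
  | zero => simp
  | succ n ih => rw [Finset.sum_range_succ, ih]; push_cast; ring

lemma sum_quart_range (m : ℕ) :
    ∑ k ∈ Finset.range m, ((k : ℝ)) ^ 4
      = m * (m - 1) * (2 * m - 1) * (3 * m ^ 2 - 3 * m - 1) / 30 := by
  induction m with
  | zero => simp
  | succ n ih => rw [Finset.sum_range_succ, ih]; push_cast; ring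

lemma key_poly (m z s : ℝ) (hm : 2 ≤ m) (hz0 : 0 ≤ z) (hmz : m * z ≤ 2)
    (hs2 : s ^ 2 ≤ z ^ 2) :
    m ^ 3 * s ^ 2 / 12 ≤ 2 * z ^ 2 * ((2 * m ^ 3 - 3 * m ^ 2 + m) / 6)
      - 2 / 3 * z ^ 4 * (m * (6 * m ^ 4 - 15 * m ^ 3 + 10 * m ^ 2 - 1) / 30) := by
  have hm0 : (0:ℝ) < m := by linarith
  have h2 : (0:ℝ) ≤ m - 2 := by linarith
  have hP : 0 ≤ m * (6 * m ^ 4 - 15 * m ^ 3 + 10 * m ^ 2 - 1) := by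
    nlinarith [mul_nonneg (mul_nonneg h2 h2) (mul_nonneg h2 h2),
      mul_nonneg (mul_nonneg h2 h2) h2, mul_nonneg h2 h2, sq_nonneg m,
      mul_nonneg (mul_nonneg h2 h2) (sq_nonneg m), mul_nonneg h2 (sq_nonneg m)]
  have h4 : 0 ≤ 4 - m ^ 2 * z ^ 2 := by nlinarith [mul_nonneg hz0 hm0.le]
  have hB : 0 ≤ m * (6 * m ^ 4 - 15 * m ^ 3 + 10 * m ^ 2 - 1) * z ^ 2 * (4 - m ^ 2 * z ^ 2) :=
    mul_nonneg (mul_nonneg hP (sq_nonneg z)) h4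
  have hA : 0 ≤ z ^ 2 * (9 * m ^ 5 + 60 * m ^ 4 - 100 * m ^ 3 + 16 * m) := by
    apply mul_nonneg (sq_nonneg z)
    nlinarith [mul_nonneg (mul_nonneg h2 h2) (mul_nonneg h2 h2),
      mul_nonneg (mul_nonneg h2 h2) h2, mul_nonneg h2 h2,
      mul_nonneg (mul_nonneg h2 h2) (sq_nonneg m), mul_nonneg h2 (sq_nonneg m),
      mul_nonneg (mul_nonneg (mul_nonneg h2 h2) h2) (sq_nonneg m)]
  have hC : 0 ≤ m ^ 5 * (z ^ 2 - s ^ 2) :=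
    mul_nonneg (by positivity) (by linarith)
  nlinarith [sq_nonneg m, mul_pos hm0 hm0, hm0]

lemma partA' (m : ℕ) (hm2 : 2 ≤ m) (z : ℝ) (hz0 : 0 ≤ z) (hz : z ≤ 2 / m) :
    |(m : ℝ)⁻¹ * ∑ k ∈ Finset.range m, Real.cos (2 * k * z)|
      ≤ 1 - (m : ℝ) ^ 2 / 12 * Real.sin z ^ 2 := by
  have hmR : (2:ℝ) ≤ m := by exact_mod_cast hm2
  have hm0 : (0:ℝ) < m := by linarith
  have hmz : (m:ℝ) * z ≤ 2 := by
    have := (le_div_iff₀ hm0).mp hz; linarith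
  have hs2 : Real.sin z ^ 2 ≤ z ^ 2 := Real.sin_sq_le_sq
  have hbd : (m:ℝ) ^ 2 / 12 * Real.sin z ^ 2 ≤ 1 / 3 := by
    nlinarith [mul_nonneg hz0 hm0.le, mul_le_mul_of_nonneg_left hs2 (sq_nonneg (m:ℝ))]
  rw [abs_le]
  constructor
  · -- lower bound
    suffices hS : -(2/3) ≤ (m : ℝ)⁻¹ * ∑ k ∈ Finset.range m, Real.cos (2 * k * z) by linarith
    rcases eq_or_lt_of_le hz0 with hz0' | hz0'
    · rw [← hz0']
      simp only [mul_zero, Real.cos_zero, Finset.sum_const, Finset.card_range, nsmul_eq_mul,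
        mul_one]
      rw [inv_mul_cancel₀ hm0.ne']
      norm_num
    · have hz1 : z ≤ 1 := by nlinarith
      have hsin : 0 < Real.sin z :=
        Real.sin_pos_of_pos_of_lt_pi hz0' (by linarith [Real.pi_gt_three])
      have hd := dirichlet_cos_sum m z
      have hSig : -(2/3 * (m:ℝ)) ≤ ∑ k ∈ Finset.range m, Real.cos (2 * k * z) := by
        rcases le_or_gt ((2 * (m:ℝ) - 1) * z) Real.pi with hc | hc
        · have hu0 : 0 ≤ (2 * (m:ℝ) - 1) * z := by nlinarith
          have hsu : 0 ≤ Real.sin ((2 * (m:ℝ) - 1) * z) :=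
            Real.sin_nonneg_of_nonneg_of_le_pi hu0 hc
          have h0 : 0 ≤ (∑ k ∈ Finset.range m, Real.cos (2 * k * z)) * (2 * Real.sin z) := by
            rw [show (∑ k ∈ Finset.range m, Real.cos (2 * k * z)) * (2 * Real.sin z)
              = 2 * Real.sin z * ∑ k ∈ Finset.range m, Real.cos (2 * k * z) from by ring, hd]
            linarith
          have := (mul_nonneg_iff_of_pos_right (by linarith : (0:ℝ) < 2 * Real.sin z)).mp h0
          nlinarith [hm0]
        · have hu4 : (2 * (m:ℝ) - 1) * z ≤ 4 := by nlinarith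
          have hsinu : -(4 - Real.pi) ≤ Real.sin ((2 * (m:ℝ) - 1) * z) := by
            have h1 : Real.sin ((2 * (m:ℝ) - 1) * z)
                = -Real.sin ((2 * (m:ℝ) - 1) * z - Real.pi) := by
              rw [Real.sin_sub_pi]; ring
            have h2 : Real.sin ((2 * (m:ℝ) - 1) * z - Real.pi)
                ≤ (2 * (m:ℝ) - 1) * z - Real.pi := Real.sin_le (by linarith)
            rw [h1]; linarith
          have h5 : Real.pi < 2 * ((m:ℝ) * z) := by nlinarith
          have hzhalf : z ≤ Real.pi / 2 := by linarith [Real.pi_gt_three]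
          have h6 : 2 / Real.pi * z ≤ Real.sin z := Real.mul_le_sin hz0 hzhalf
          have h7 : Real.pi * Real.pi⁻¹ = 1 := mul_inv_cancel₀ Real.pi_ne_zero
          have hkey : (1:ℝ) ≤ (m:ℝ) * Real.sin z := by
            have hp1 : 0 < (2 * ((m:ℝ) * z) - Real.pi) * Real.pi⁻¹ :=
              mul_pos (by linarith) (inv_pos.2 Real.pi_pos)
            have hp2 : (2 * ((m:ℝ) * z) - Real.pi) * Real.pi⁻¹
                = 2 * ((m:ℝ) * z) * Real.pi⁻¹ - Real.pi * Real.pi⁻¹ := by ring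
            have hp3 := mul_le_mul_of_nonneg_left h6 hm0.le
            have hp4 : (m:ℝ) * (2 / Real.pi * z) = 2 * ((m:ℝ) * z) * Real.pi⁻¹ := by ring
            rw [hp4] at hp3
            linarith
          have hnum : -(4/3 * ((m:ℝ) * Real.sin z))
              ≤ Real.sin ((2 * (m:ℝ) - 1) * z) + Real.sin z := by
            linarith [Real.pi_gt_three, hsin.le, hkey, hsinu]
          have h0 : 0 ≤ ((∑ k ∈ Finset.range m, Real.cos (2 * k * z)) + 2/3 * (m:ℝ))
              * (2 * Real.sin z) := by
            rw [show ((∑ k ∈ Finset.range m, Real.cos (2 * k * z)) + 2/3 * (m:ℝ))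
                * (2 * Real.sin z)
              = 2 * Real.sin z * (∑ k ∈ Finset.range m, Real.cos (2 * k * z))
                + 4/3 * ((m:ℝ) * Real.sin z) from by ring, hd]
            linarith [hnum]
          have := (mul_nonneg_iff_of_pos_right (by linarith : (0:ℝ) < 2 * Real.sin z)).mp h0
          linarith
      have h8 : 0 ≤ (m:ℝ)⁻¹ * ((∑ k ∈ Finset.range m, Real.cos (2 * k * z)) + 2/3 * (m:ℝ)) :=
        mul_nonneg (inv_nonneg.2 hm0.le) (by linarith)
      rw [mul_add] at h8
      have h9 : (m:ℝ)⁻¹ * (2/3 * (m:ℝ)) = 2/3 := by field_simp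
      linarith
  · -- upper bound
    have hterm : ∀ k ∈ Finset.range m,
        Real.cos (2 * k * z) ≤ 1 - 2 * z ^ 2 * (k:ℝ) ^ 2 + 2/3 * z ^ 4 * (k:ℝ) ^ 4 := by
      intro k _
      have := cos_le_quartic' (2 * k * z)
      nlinarith [this]
    have hsum := Finset.sum_le_sum hterm
    have heval : ∑ k ∈ Finset.range m, (1 - 2 * z ^ 2 * (k:ℝ) ^ 2 + 2/3 * z ^ 4 * (k:ℝ) ^ 4)
        = (m:ℝ) - 2 * z ^ 2 * ((m:ℝ) * (m - 1) * (2 * m - 1) / 6)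
          + 2/3 * z ^ 4 * ((m:ℝ) * (m - 1) * (2 * m - 1) * (3 * (m:ℝ) ^ 2 - 3 * m - 1) / 30) := by
      rw [Finset.sum_add_distrib, Finset.sum_sub_distrib, Finset.sum_const, Finset.card_range,
        nsmul_eq_mul, mul_one, ← Finset.mul_sum, ← Finset.mul_sum, sum_sq_range, sum_quart_range]
    rw [heval] at hsum
    have kp := key_poly (m:ℝ) z (Real.sin z) hmR hz0 hmz hs2
    have hfin : ∑ k ∈ Finset.range m, Real.cos (2 * k * z)
        ≤ (m:ℝ) * (1 - (m:ℝ) ^ 2 / 12 * Real.sin z ^ 2) := by linarith [hsum, kp]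
    have := mul_le_mul_of_nonneg_left hfin (inv_nonneg.2 hm0.le)
    rwa [inv_mul_cancel_left₀ hm0.ne'] at this

lemma partB' (m : ℕ) (hm2 : 2 ≤ m) (w : ℝ) (hw1 : 2 / m ≤ w) (hw2 : w ≤ Real.pi / 2) :
    |(m : ℝ)⁻¹ * ∑ k ∈ Finset.range m, Real.cos (2 * k * w)| ≤ 3 / 4 := by
  have hmR : (2:ℝ) ≤ m := by exact_mod_cast hm2
  have hm0 : (0:ℝ) < m := by linarith
  have hw0 : 0 < w := lt_of_lt_of_le (by positivity) hw1
  have hsin : 0 < Real.sin w :=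
    Real.sin_pos_of_pos_of_lt_pi hw0 (by linarith [Real.pi_pos])
  have hmw : (2:ℝ) ≤ (m:ℝ) * w := by
    have := (div_le_iff₀ hm0).mp hw1; linarith
  have h6 : 2 / Real.pi * w ≤ Real.sin w := Real.mul_le_sin hw0.le hw2
  have hkey : (1:ℝ) ≤ (m:ℝ) * Real.sin w := by
    have hp1 : 0 ≤ ((m:ℝ) * w - 2) * Real.pi⁻¹ :=
      mul_nonneg (by linarith) (inv_nonneg.2 Real.pi_pos.le)
    have hp2 : ((m:ℝ) * w - 2) * Real.pi⁻¹
        = (m:ℝ) * w * Real.pi⁻¹ - 2 * Real.pi⁻¹ := by ring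
    have hp3 := mul_le_mul_of_nonneg_left h6 hm0.le
    have hp4 : (m:ℝ) * (2 / Real.pi * w) = 2 * ((m:ℝ) * w * Real.pi⁻¹) := by ring
    rw [hp4] at hp3
    have hp5 : (1:ℝ) / 4 ≤ 1 / Real.pi :=
      one_div_le_one_div_of_le Real.pi_pos Real.pi_le_four
    have hp6 : (1:ℝ) / Real.pi = Real.pi⁻¹ := one_div Real.pi
    linarith
  have hd := dirichlet_cos_sum m w
  have hs1 : Real.sin ((2 * (m:ℝ) - 1) * w) ≤ 1 := Real.sin_le_one _
  have hs2 : -1 ≤ Real.sin ((2 * (m:ℝ) - 1) * w) := Real.neg_one_le_sin _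
  have hmono : 0 ≤ ((m:ℝ) - 2) * Real.sin w := mul_nonneg (by linarith) hsin.le
  have hup : (∑ k ∈ Finset.range m, Real.cos (2 * k * w)) ≤ 3/4 * m := by
    have h1 : 2 * Real.sin w * (∑ k ∈ Finset.range m, Real.cos (2 * k * w))
        ≤ 2 * Real.sin w * (3/4 * (m:ℝ)) := by
      rw [hd]
      nlinarith [hkey, hmono, hsin.le]
    exact le_of_mul_le_mul_left h1 (by linarith)
  have hlo : -(3/4 * (m:ℝ)) ≤ ∑ k ∈ Finset.range m, Real.cos (2 * k * w) := by
    have h1 : 2 * Real.sin w * (-(3/4 * (m:ℝ)))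
        ≤ 2 * Real.sin w * (∑ k ∈ Finset.range m, Real.cos (2 * k * w)) := by
      rw [hd]
      nlinarith [hkey, hmono, hsin.le]
    exact le_of_mul_le_mul_left h1 (by linarith)
  rw [abs_mul, abs_of_pos (inv_pos.2 hm0)]
  have habs : |∑ k ∈ Finset.range m, Real.cos (2 * k * w)| ≤ 3/4 * m :=
    abs_le.2 ⟨hlo, hup⟩
  have := mul_le_mul_of_nonneg_left habs (inv_nonneg.2 hm0.le)
  have h9 : (m:ℝ)⁻¹ * (3/4 * (m:ℝ)) = 3/4 := by field_simp
  linarith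

lemma cos_sum_abs (m : ℕ) (z : ℝ) :
    ∑ k ∈ Finset.range m, Real.cos (2 * k * |z|)
      = ∑ k ∈ Finset.range m, Real.cos (2 * k * z) := by
  rcases abs_cases z with ⟨h1, _⟩ | ⟨h1, _⟩
  · rw [h1]
  · rw [h1]
    exact Finset.sum_congr rfl fun k _ => by
      rw [show 2 * (k:ℝ) * (-z) = -(2 * k * z) by ring, Real.cos_neg]

/-- For an even integer `m ≥ 2`: (a) `|H_m(sin z)| ≤ 1 − (m²/12) sin² z` whenever
`|z| ≤ 2/m`; (b) consequently `|H_m(x)| ≤ max(3/4, 1 − (m²/12) x²)` on `[−1,1]`. -/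
theorem Hpoly_quadratic_decay (m : ℕ) (hm : Even m) (hm2 : 2 ≤ m) :
    (∀ z : ℝ, |z| ≤ 2 / (m : ℝ) →
      |(Hpoly m).eval (Real.sin z)| ≤ 1 - (m : ℝ) ^ 2 / 12 * Real.sin z ^ 2) ∧
    (∀ x ∈ Set.Icc (-1 : ℝ) 1,
      |(Hpoly m).eval x| ≤ max (3 / 4) (1 - (m : ℝ) ^ 2 / 12 * x ^ 2)) := by
  have hsinabs : ∀ z : ℝ, Real.sin |z| ^ 2 = Real.sin z ^ 2 := by
    intro z
    rcases abs_cases z with ⟨h1, _⟩ | ⟨h1, _⟩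
    · rw [h1]
    · rw [h1, Real.sin_neg, neg_sq]
  have hA : ∀ z : ℝ, |z| ≤ 2 / (m : ℝ) →
      |(Hpoly m).eval (Real.sin z)| ≤ 1 - (m : ℝ) ^ 2 / 12 * Real.sin z ^ 2 := by
    intro z hz
    have h := partA' m hm2 |z| (abs_nonneg z) hz
    rw [cos_sum_abs, hsinabs] at h
    rwa [Hpoly_eval_sin]
  refine ⟨hA, ?_⟩
  intro x hx
  obtain ⟨hx1, hx2⟩ := hx
  set z := Real.arcsin x with hzdef
  have hsz : Real.sin z = x := Real.sin_arcsin hx1 hx2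
  have hzlo : -(Real.pi / 2) ≤ z := Real.neg_pi_div_two_le_arcsin x
  have hzhi : z ≤ Real.pi / 2 := Real.arcsin_le_pi_div_two x
  rcases le_or_gt |z| (2 / (m:ℝ)) with hc | hc
  · refine le_trans ?_ (le_max_right _ _)
    have := hA z hc
    rwa [hsz] at this
  · refine le_trans ?_ (le_max_left _ _)
    have hB := partB' m hm2 |z| hc.le (abs_le.2 ⟨hzlo, hzhi⟩)
    rw [cos_sum_abs] at hB
    rw [← hsz, Hpoly_eval_sin]
    exact hB
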